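/- If a dynamical system (X,f) on a compact metric space has the shadowing property, then the restriction of f to its non-wandering set Ω(f) also has the shadowing property. -/
import Mathlib


open Set Function

variable {X : Type*}

/-- A `δ`-pseudo-orbit of `f`. -/
def IsPseudoOrbit [MetricSpace X] (f : X → X) (δ : ℝ) (x : ℕ → X) : Prop :=
  ∀ n : ℕ, dist (f (x n)) (x (n + 1)) < δ

/-- `z` ε-traces the sequence `x`. -/
def Traces [MetricSpace X] (f : X → X) (ε : ℝ) (z : X) (x : ℕ → X) : Prop :=
  ∀ n : ℕ, dist (f^[n] z) (x n) < ε

/-- The shadowing property. -/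
def HasShadowing [MetricSpace X] (f : X → X) : Prop :=
  ∀ ε > (0 : ℝ), ∃ δ > (0 : ℝ), ∀ x : ℕ → X, IsPseudoOrbit f δ x → ∃ z : X, Traces f ε z x

/-- The shadowing property of the restriction of `f` to an invariant set `S`. -/
def HasShadowingOn [MetricSpace X] (f : X → X) (S : Set X) : Prop :=
  ∀ ε > (0 : ℝ), ∃ δ > (0 : ℝ), ∀ x : ℕ → X, (∀ n, x n ∈ S) → IsPseudoOrbit f δ x →
    ∃ z ∈ S, Traces f ε z x

/-- Non-wandering point. -/
def NonWanderingPt [TopologicalSpace X] (f : X → X) (x : X) : Prop :=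
  ∀ U ∈ nhds x, ∃ k : ℕ, 1 ≤ k ∧ ∃ y ∈ U, f^[k] y ∈ U

/-- The (forward) orbit of a point. -/
def orbitSet (f : X → X) (x : X) : Set X := Set.range fun n : ℕ => f^[n] x

/-- Recurrent point. -/
def RecurrentPt [TopologicalSpace X] (f : X → X) (x : X) : Prop :=
  ∀ U ∈ nhds x, ∃ k : ℕ, 1 ≤ k ∧ f^[k] x ∈ U

/-- Minimal point: every point of the orbit closure has `x` in its own orbit closure,
i.e. the orbit closure of `x` is a minimal set. -/
def MinimalPt [TopologicalSpace X] (f : X → X) (x : X) : Prop :=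
  ∀ y ∈ closure (orbitSet f x), x ∈ closure (orbitSet f y)

/-- Regularly recurrent point. -/
def RegRecPt [TopologicalSpace X] (f : X → X) (x : X) : Prop :=
  ∀ U ∈ nhds x, ∃ k : ℕ, 1 ≤ k ∧ ∀ n : ℕ, f^[k * n] x ∈ U

/-- Equicontinuity of the family of iterates of `f`. -/
def EquicontinuousMap [MetricSpace X] (f : X → X) : Prop :=
  ∀ ε > (0 : ℝ), ∃ δ > (0 : ℝ), ∀ x y : X, dist x y < δ →
    ∀ n : ℕ, dist (f^[n] x) (f^[n] y) < ε

/-- `u` is a sensitive point of the subsystem on `S`. -/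
def SensitivePtOn [MetricSpace X] (f : X → X) (S : Set X) (u : X) : Prop :=
  ∃ δ > (0 : ℝ), ∀ U ∈ nhds u, ∃ n : ℕ, ∃ a ∈ U ∩ S, ∃ b ∈ U ∩ S,
    dist (f^[n] a) (f^[n] b) > δ

/-- `u` is a sensitive point of `(X,f)`. -/
def SensitivePt [MetricSpace X] (f : X → X) (u : X) : Prop :=
  ∃ δ > (0 : ℝ), ∀ U ∈ nhds u, ∃ n : ℕ, ∃ a ∈ U, ∃ b ∈ U,
    dist (f^[n] a) (f^[n] b) > δ

/-- Topological transitivity. -/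
def TopTransitive {Y : Type*} [TopologicalSpace Y] (g : Y → Y) : Prop :=
  ∀ U V : Set Y, IsOpen U → U.Nonempty → IsOpen V → V.Nonempty →
    ∃ n : ℕ, 1 ≤ n ∧ (g^[n] '' U ∩ V).Nonempty

/-- Weak mixing: the product system is transitive. -/
def WeaklyMixing [TopologicalSpace X] (f : X → X) : Prop :=
  TopTransitive (fun p : X × X => (f p.1, f p.2))

/-- Strong mixing. -/
def StronglyMixing {Y : Type*} [TopologicalSpace Y] (g : Y → Y) : Prop :=
  ∀ U V : Set Y, IsOpen U → U.Nonempty → IsOpen V → V.Nonempty →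
    ∃ N : ℕ, ∀ n ≥ N, (g^[n] '' U ∩ V).Nonempty

/-- The shift map on the full shift over `d` symbols. -/
def shiftMap (d : ℕ) : (ℕ → Fin d) → (ℕ → Fin d) := fun x n => x (n + 1)

/-- `π` is a factor map from the subsystem `(Y, f^[m])` onto the full shift on `d` symbols. -/
def FactorOntoShift [TopologicalSpace X] (f : X → X) (m : ℕ) (Y : Set X) (d : ℕ)
    (π : X → (ℕ → Fin d)) : Prop :=
  ContinuousOn π Y ∧ π '' Y = Set.univ ∧ ∀ y ∈ Y, π (f^[m] y) = shiftMap d (π y)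


section ShadowingNonwanderingAux

open Metric Filter

variable [MetricSpace X] [CompactSpace X]

private lemma srn_unifCont (f : X → X) (hf : Continuous f) :
    ∀ ε > (0:ℝ), ∃ δ > (0:ℝ), ∀ a b : X, dist a b < δ → dist (f a) (f b) < ε := by
  have := Metric.uniformContinuous_iff.mp (CompactSpace.uniformContinuous_of_continuous hf)
  intro ε hε
  obtain ⟨δ, hδ, h⟩ := this ε hε
  exact ⟨δ, hδ, fun a b hab => h hab⟩

private lemma srn_chain_back (f : X → X) (hf : Continuous f) {δ : ℝ} (hδ : 0 < δ) :
    ∃ δ₁ > (0:ℝ), δ₁ < δ ∧ ∀ a b : X, NonWanderingPt f a → dist b (f a) < δ₁ →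
      ∃ L : ℕ, 1 ≤ L ∧ ∃ P : ℕ → X, P 0 = b ∧ P L = a ∧
        ∀ i < L, dist (f (P i)) (P (i+1)) < δ := by
  obtain ⟨γ₀, hγ₀, hγ₀p⟩ := srn_unifCont f hf (δ/4) (by linarith)
  set β₁ : ℝ := min (δ/4) γ₀ with hβ₁def
  have hβ₁ : 0 < β₁ := lt_min (by linarith) hγ₀
  have hβ₁δ : β₁ ≤ δ/4 := min_le_left _ _
  have hβ₁γ₀ : β₁ ≤ γ₀ := min_le_right _ _
  obtain ⟨γ₁, hγ₁, hγ₁p⟩ := srn_unifCont f hf (β₁/2) (by linarith)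
  set β₂ : ℝ := min γ₁ (β₁/2) with hβ₂def
  have hβ₂ : 0 < β₂ := lt_min hγ₁ (by linarith)
  have hβ₂γ₁ : β₂ ≤ γ₁ := min_le_left _ _
  have hβ₂β₁ : β₂ ≤ β₁/2 := min_le_right _ _
  refine ⟨β₂, hβ₂, by linarith, ?_⟩
  intro a b ha hb
  obtain ⟨k, hk1, y, hy, hyk⟩ := ha (Metric.ball a β₂) (Metric.ball_mem_nhds a hβ₂)
  rw [Metric.mem_ball] at hy hyk
  -- hy : dist y a < β₂, hyk : dist (f^[k] y) a < β₂
  have hfyfa : dist (f y) (f a) < β₁/2 := hγ₁p _ _ (lt_of_lt_of_le hy hβ₂γ₁)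
  have hbfy : dist b (f y) < β₁ := by
    have := dist_triangle b (f a) (f y)
    rw [dist_comm (f a) (f y)] at this
    linarith
  have hfbffy : dist (f b) (f (f y)) < δ/4 := hγ₀p _ _ (lt_of_lt_of_le hbfy hβ₁γ₀)
  rcases eq_or_lt_of_le hk1 with hk1' | hk2
  · -- k = 1
    have hfy : dist (f y) a < β₂ := by
      have h1 : f^[k] y = f y := by rw [← hk1']; simp
      rwa [h1] at hyk
    refine ⟨1, le_refl 1, fun i => if i = 0 then b else a, by simp, by simp, ?_⟩
    intro i hi
    interval_cases i
    have e0 : (if (0:ℕ) = 0 then b else a) = b := by simp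
    have e1 : (if (1:ℕ) = 0 then b else a) = a := by simp
    simp only [e0, e1]
    have h1 : dist (f (f y)) (f a) < β₁/2 := hγ₁p _ _ (lt_of_lt_of_le hfy hβ₂γ₁)
    have h2 : dist (f a) a < β₁/2 + β₂ := by
      have := dist_triangle (f a) (f y) a
      rw [dist_comm (f a) (f y)] at this
      linarith
    calc dist (f b) a ≤ dist (f b) (f (f y)) + dist (f (f y)) (f a) + dist (f a) a :=
          dist_triangle4 _ _ _ _
      _ < δ/4 + β₁/2 + (β₁/2 + β₂) := by linarith
      _ ≤ δ := by linarith
  · -- k ≥ 2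
    have hk2' : 2 ≤ k := hk2
    set P : ℕ → X := fun i => if i = 0 then b else if i < k - 1 then f^[i+1] y else a with hP
    have hP0 : P 0 = b := by simp [hP]
    have hPmid : ∀ i, i ≠ 0 → i < k - 1 → P i = f^[i+1] y := by
      intro i h1 h2; simp only [hP, if_neg h1, if_pos h2]
    have hPlast : ∀ i, i ≠ 0 → ¬ i < k - 1 → P i = a := by
      intro i h1 h2; simp only [hP, if_neg h1, if_neg h2]
    refine ⟨k - 1, by omega, P, hP0, hPlast _ (by omega) (lt_irrefl _), ?_⟩
    intro i hi
    rcases Nat.eq_zero_or_pos i with hi0 | hipos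
    · subst hi0
      rw [hP0]
      simp only [Nat.zero_add]
      rcases lt_or_ge 1 (k-1) with h1k | h1k
      · rw [hPmid _ one_ne_zero h1k]
        have : f^[1+1] y = f (f y) := by simp [Function.iterate_succ_apply]
        rw [this]
        linarith
      · have hk2e : k = 2 := by omega
        rw [hPlast _ one_ne_zero (by omega)]
        have hf2 : f^[k] y = f (f y) := by rw [hk2e]; simp [Function.iterate_succ_apply]
        have hd : dist (f (f y)) a < β₂ := by rwa [hf2] at hyk
        calc dist (f b) a ≤ dist (f b) (f (f y)) + dist (f (f y)) a := dist_triangle _ _ _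
          _ < δ/4 + β₂ := by linarith
          _ ≤ δ := by linarith
    · rw [hPmid i (by omega) hi]
      rcases lt_or_ge (i+1) (k-1) with h2 | h2
      · rw [hPmid _ (by omega) h2, ← Function.iterate_succ_apply' f (i+1) y]
        simp [hδ]
      · rw [hPlast _ (by omega) (by omega)]
        have hlast : f (f^[i+1] y) = f^[k] y := by
          rw [← Function.iterate_succ_apply' f (i+1) y]
          congr 1
          omega
        rw [hlast]
        linarith

private lemma srn_chain_concat (f : X → X) {δ : ℝ} {L₁ L₂ : ℕ} {P₁ P₂ : ℕ → X}
    (hL₁ : 1 ≤ L₁) (hjoin : P₁ L₁ = P₂ 0)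
    (h₁ : ∀ i < L₁, dist (f (P₁ i)) (P₁ (i+1)) < δ)
    (h₂ : ∀ i < L₂, dist (f (P₂ i)) (P₂ (i+1)) < δ) :
    ∃ P : ℕ → X, P 0 = P₁ 0 ∧ P (L₁ + L₂) = P₂ L₂ ∧
      ∀ i < L₁ + L₂, dist (f (P i)) (P (i+1)) < δ := by
  set P : ℕ → X := fun i => if i < L₁ then P₁ i else P₂ (i - L₁) with hP
  have hPlow : ∀ i, i < L₁ → P i = P₁ i := fun i h => by simp only [hP, if_pos h]
  have hPhigh : ∀ i, L₁ ≤ i → P i = P₂ (i - L₁) := fun i h => by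
    simp only [hP, if_neg (not_lt.mpr h)]
  refine ⟨P, hPlow 0 (by omega), by rw [hPhigh _ (by omega)]; congr 1; omega, ?_⟩
  intro i hi
  rcases lt_or_ge i L₁ with h | h
  · rw [hPlow i h]
    rcases lt_or_ge (i+1) L₁ with h' | h'
    · rw [hPlow _ h']; exact h₁ i h
    · have : i + 1 = L₁ := by omega
      rw [hPhigh _ h', show i + 1 - L₁ = 0 by omega, ← hjoin, ← this]
      exact h₁ i h
  · rw [hPhigh i h, hPhigh (i+1) (by omega), show i + 1 - L₁ = (i - L₁) + 1 by omega]
    exact h₂ (i - L₁) (by omega)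

private lemma srn_back_chain (f : X → X) {δ δ₁ : ℝ} (hδ₁ : 0 < δ₁)
    (hcb : ∀ a b : X, NonWanderingPt f a → dist b (f a) < δ₁ →
      ∃ L : ℕ, 1 ≤ L ∧ ∃ P : ℕ → X, P 0 = b ∧ P L = a ∧
        ∀ i < L, dist (f (P i)) (P (i+1)) < δ)
    (hδδ₁ : δ₁ < δ)
    (x : ℕ → X) (hnw : ∀ n, NonWanderingPt f (x n))
    (hpo : ∀ n, dist (f (x n)) (x (n+1)) < δ₁) :
    ∀ N : ℕ, ∃ L : ℕ, 1 ≤ L ∧ ∃ P : ℕ → X, P 0 = x N ∧ P L = x 0 ∧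
      ∀ i < L, dist (f (P i)) (P (i+1)) < δ := by
  intro N
  induction N with
  | zero =>
    obtain ⟨L, hL, Q, hQ0, hQL, hQj⟩ := hcb (x 0) (f (x 0)) (hnw 0) (by simp [hδ₁])
    set P₁ : ℕ → X := fun i => if i = 0 then x 0 else f (x 0) with hP₁
    have h₁ : ∀ i < 1, dist (f (P₁ i)) (P₁ (i+1)) < δ := by
      intro i hi
      interval_cases i
      simp [hP₁, hδ₁.trans hδδ₁]
    obtain ⟨P, hP0, hPL, hPj⟩ := srn_chain_concat f (le_refl 1)
      (by simp [hP₁, hQ0]) h₁ hQj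
    exact ⟨1 + L, by omega, P, by rw [hP0]; simp [hP₁], by rw [hPL, hQL], hPj⟩
  | succ N ih =>
    obtain ⟨L₂, hL₂, Q, hQ0, hQL, hQj⟩ := ih
    obtain ⟨L₁, hL₁, R, hR0, hRL, hRj⟩ := hcb (x N) (x (N+1)) (hnw N)
      (by rw [dist_comm]; exact hpo N)
    obtain ⟨P, hP0, hPL, hPj⟩ := srn_chain_concat f hL₁ (by rw [hRL, hQ0])
      hRj hQj
    exact ⟨L₁ + L₂, by omega, P, by rw [hP0, hR0], by rw [hPL, hQL], hPj⟩

private lemma srn_nw_trace_upto (f : X → X) (hf : Continuous f) {ε' δ δ₁ : ℝ}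
    (hsh : ∀ x : ℕ → X, (∀ n, dist (f (x n)) (x (n+1)) < δ) →
      ∃ z, ∀ n, dist (f^[n] z) (x n) < ε')
    (hδδ₁ : δ₁ < δ)
    (x : ℕ → X) (hpo : ∀ n, dist (f (x n)) (x (n+1)) < δ₁)
    (N : ℕ)
    (hback : ∃ L : ℕ, 1 ≤ L ∧ ∃ P : ℕ → X, P 0 = x N ∧ P L = x 0 ∧
      ∀ i < L, dist (f (P i)) (P (i+1)) < δ) :
    ∃ u : X, NonWanderingPt f u ∧ ∀ i ≤ N, dist (f^[i] u) (x i) ≤ ε' := by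
  obtain ⟨L, hL1, P, hP0, hPL, hPj⟩ := hback
  set p := N + L with hp
  have hpN : N < p := by omega
  have hp1 : 1 ≤ p := by omega
  set C : ℕ → X := fun i => if i ≤ N then x i else P (i - N) with hC
  have hCx : ∀ i, i ≤ N → C i = x i := fun i h => by simp only [hC, if_pos h]
  have hCP : ∀ i, N < i → C i = P (i - N) := fun i h => by
    simp only [hC, if_neg (by omega : ¬ i ≤ N)]
  have hCp : C p = x 0 := by rw [hCP p hpN, show p - N = L by omega, hPL]
  have hC0 : C 0 = x 0 := hCx 0 (Nat.zero_le N)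
  have hCj : ∀ i < p, dist (f (C i)) (C (i+1)) < δ := by
    intro i hi
    rcases lt_or_ge i N with h | h
    · rw [hCx i (by omega), hCx (i+1) (by omega)]
      exact (hpo i).trans hδδ₁
    · rcases eq_or_lt_of_le h with h' | h'
      · rw [hCx i (by omega), hCP (i+1) (by omega), show i + 1 - N = 1 by omega,
          ← h', ← hP0]
        exact hPj 0 (by omega)
      · rw [hCP i h', hCP (i+1) (by omega), show i + 1 - N = (i - N) + 1 by omega]
        exact hPj (i - N) (by omega)
  set ζ : ℕ → X := fun n => C (n % p) with hζ
  have hζpo : ∀ n, dist (f (ζ n)) (ζ (n+1)) < δ := by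
    intro n
    have hr : n % p < p := Nat.mod_lt _ (by omega)
    have h1 : (n+1) % p = (n % p + 1) % p := (Nat.mod_add_mod n p 1).symm
    show dist (f (C (n % p))) (C ((n+1) % p)) < δ
    rcases lt_or_ge (n % p + 1) p with h2 | h2
    · rw [h1, Nat.mod_eq_of_lt h2]
      exact hCj _ hr
    · have h3 : n % p + 1 = p := by omega
      have h4 := hCj _ hr
      rw [h3] at h4
      rwa [h1, h3, Nat.mod_self, hC0, ← hCp]
  obtain ⟨z, hz⟩ := hsh ζ hζpo
  obtain ⟨u, -, φ, hφ, hlim⟩ :=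
    isCompact_univ.tendsto_subseq (fun j : ℕ => mem_univ (f^[j*p] z))
  have hlim' : Tendsto (fun j => f^[(φ j)*p] z) atTop (nhds u) := hlim
  refine ⟨u, ?_, ?_⟩
  · intro U hU
    have hev : ∀ᶠ j in atTop, f^[(φ j)*p] z ∈ U := hlim'.eventually_mem hU
    obtain ⟨M, hM⟩ := eventually_atTop.mp hev
    have hMM : φ M < φ (M+1) := hφ (Nat.lt_succ_self M)
    refine ⟨(φ (M+1) - φ M) * p, Nat.one_le_iff_ne_zero.mpr ?_,
      f^[(φ M)*p] z, hM M (le_refl M), ?_⟩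
    · have : 0 < (φ (M+1) - φ M) * p := Nat.mul_pos (by omega) (by omega)
      omega
    · rw [← Function.iterate_add_apply, ← add_mul, Nat.sub_add_cancel hMM.le]
      exact hM (M+1) (by omega)
  · intro i hiN
    have hfi : Tendsto (fun j => f^[i] (f^[(φ j)*p] z)) atTop (nhds (f^[i] u)) :=
      ((hf.iterate i).tendsto u).comp hlim'
    have hb : ∀ j, dist (f^[i] (f^[(φ j)*p] z)) (x i) < ε' := by
      intro j
      rw [← Function.iterate_add_apply]
      have h1 : ζ (i + (φ j)*p) = x i := by
        show C ((i + (φ j)*p) % p) = x i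
        rw [Nat.add_mul_mod_self_right, Nat.mod_eq_of_lt (by omega : i < p)]
        exact hCx i hiN
      have h2 := hz (i + (φ j)*p)
      rwa [h1] at h2
    exact le_of_tendsto (hfi.dist tendsto_const_nhds)
      (Eventually.of_forall (fun j => (hb j).le))

end ShadowingNonwanderingAux

theorem shadowing_restricts_to_nonwandering [MetricSpace X] [CompactSpace X]
    (f : X → X) (hf : Continuous f) (hsh : HasShadowing f) :
    HasShadowingOn f {x : X | NonWanderingPt f x} := by
  intro ε hε
  have hε' : (0:ℝ) < ε/2 := by linarith
  obtain ⟨δ, hδpos, hδ⟩ := hsh (ε/2) hε'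
  obtain ⟨δ₁, hδ₁pos, hδδ₁, hcb⟩ := srn_chain_back f hf hδpos
  refine ⟨δ₁, hδ₁pos, ?_⟩
  intro x hxΩ hxpo
  have hnw : ∀ n, NonWanderingPt f (x n) := hxΩ
  have hback := srn_back_chain f hδ₁pos hcb hδδ₁ x hnw hxpo
  have hshδ : ∀ y : ℕ → X, (∀ n, dist (f (y n)) (y (n+1)) < δ) →
      ∃ z, ∀ n, dist (f^[n] z) (y n) < ε/2 := fun y h => hδ y h
  have hU : ∀ N : ℕ, ∃ u : X, NonWanderingPt f u ∧
      ∀ i ≤ N, dist (f^[i] u) (x i) ≤ ε/2 :=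
    fun N => srn_nw_trace_upto f hf hshδ hδδ₁ x hxpo N (hback N)
  choose u hu1 hu2 using hU
  obtain ⟨w, -, ψ, hψ, hwlim⟩ :=
    isCompact_univ.tendsto_subseq (fun N : ℕ => Set.mem_univ (u N))
  have hwlim' : Filter.Tendsto (fun m => u (ψ m)) Filter.atTop (nhds w) := hwlim
  refine ⟨w, ?_, ?_⟩
  · show NonWanderingPt f w
    intro U hU'
    obtain ⟨r, hr, hball⟩ := Metric.mem_nhds_iff.mp hU'
    have hev : ∀ᶠ m in Filter.atTop, u (ψ m) ∈ Metric.ball w (r/2) :=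
      hwlim'.eventually_mem (Metric.ball_mem_nhds w (by linarith))
    obtain ⟨M, hM⟩ := Filter.eventually_atTop.mp hev
    have hm : dist (u (ψ M)) w < r/2 := Metric.mem_ball.mp (hM M (le_refl M))
    obtain ⟨k, hk, y, hy, hky⟩ :=
      hu1 (ψ M) (Metric.ball (u (ψ M)) (r/2)) (Metric.ball_mem_nhds _ (by linarith))
    rw [Metric.mem_ball] at hy hky
    refine ⟨k, hk, y, hball (Metric.mem_ball.mpr ?_), hball (Metric.mem_ball.mpr ?_)⟩
    · calc dist y w ≤ dist y (u (ψ M)) + dist (u (ψ M)) w := dist_triangle _ _ _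
        _ < r/2 + r/2 := by linarith
        _ = r := by ring
    · calc dist (f^[k] y) w ≤ dist (f^[k] y) (u (ψ M)) + dist (u (ψ M)) w :=
          dist_triangle _ _ _
        _ < r/2 + r/2 := by linarith
        _ = r := by ring
  · intro n
    have hfi : Filter.Tendsto (fun m => f^[n] (u (ψ m))) Filter.atTop (nhds (f^[n] w)) :=
      ((hf.iterate n).tendsto w).comp hwlim'
    have hle : dist (f^[n] w) (x n) ≤ ε/2 :=
      le_of_tendsto (hfi.dist tendsto_const_nhds)
        (Filter.eventually_atTop.mpr ⟨n, fun m hm => hu2 (ψ m) n (le_trans hm hψ.le_apply)⟩)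
    linarith
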